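/- Let n ≥ 11 be an integer, p ≥ p_JL, and let σ = σ(n,p), L and v_∞ be as defined; note σ(p−1) − 2 > 0. Suppose u : (ℝⁿ∖{0})×(0,∞) → ℝ satisfies: for every ε > 0 there exists T > 0 such that u(x,t) ≥ v_∞(x) − ε·φ_σ(x,t)·t^{−σ/2} for all x ∈ ℝⁿ∖{0} and all t ≥ T. Then sup_{x ∈ ℝⁿ∖{0}} u(x,t) → ∞ as t → ∞. -/

import Mathlib

open Real

/-- The weight `φ_σ(x,t) = (√t/|x|)^σ` for `|x| ≤ √t`, and `1` for `|x| ≥ √t`. -/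
noncomputable def phiWeight (n : ℕ) (σ : ℝ) (x : EuclideanSpace ℝ (Fin n)) (t : ℝ) : ℝ :=
  if ‖x‖ ≤ Real.sqrt t then (Real.sqrt t / ‖x‖) ^ σ else 1

/-- Grow-up: if for every `ε > 0` eventually `u(x,t) ≥ v_∞(x) − ε·φ_σ(x,t)·t^{−σ/2}`,
then `sup_x u(x,t) → ∞` as `t → ∞`. -/
theorem sup_tendsto_atTop (n : ℕ) (hn : 11 ≤ n) (p : ℝ)
    (hp : ((n : ℝ) - 2 * Real.sqrt ((n : ℝ) - 1)) /
      ((n : ℝ) - 4 - 2 * Real.sqrt ((n : ℝ) - 1)) ≤ p)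
    (σ L : ℝ)
    (hσ : σ = ((n : ℝ) - 2) / 2 -
      Real.sqrt (((n : ℝ) - 2) ^ 2 / 4 - (2 * p / (p - 1)) * ((n : ℝ) - 2 - 2 / (p - 1))))
    (hL : L = ((2 / (p - 1)) * ((n : ℝ) - 2 - 2 / (p - 1))) ^ (1 / (p - 1)))
    (vinf : EuclideanSpace ℝ (Fin n) → ℝ)
    (hvinf : ∀ x : EuclideanSpace ℝ (Fin n), vinf x = L * ‖x‖ ^ (-(2 / (p - 1))))
    (u : EuclideanSpace ℝ (Fin n) → ℝ → ℝ)
    (hu : ∀ ε > (0 : ℝ), ∃ T > (0 : ℝ), ∀ x : EuclideanSpace ℝ (Fin n), x ≠ 0 → ∀ t ≥ T,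
      vinf x - ε * phiWeight n σ x t * t ^ (-σ / 2) ≤ u x t) :
    ∀ M : ℝ, ∃ T > (0 : ℝ), ∀ t ≥ T, ∃ x : EuclideanSpace ℝ (Fin n), x ≠ 0 ∧
      M ≤ u x t := by
  intro M
  have hn' : (11 : ℝ) ≤ (n : ℝ) := by exact_mod_cast hn
  set s := Real.sqrt ((n : ℝ) - 1) with hs
  have hs0 : 0 ≤ s := Real.sqrt_nonneg _
  have hs2 : s ^ 2 = (n : ℝ) - 1 := Real.sq_sqrt (by linarith)
  have hslt : s < ((n : ℝ) - 4) / 2 := by nlinarith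
  have hden : 0 < (n : ℝ) - 4 - 2 * s := by linarith
  -- p > 1
  have hpJL : ((n : ℝ) - 2 * s) / ((n : ℝ) - 4 - 2 * s)
      = 1 + 4 / ((n : ℝ) - 4 - 2 * s) := by field_simp; ring
  have hp1 : 1 < p := by
    have h2 : 0 < 4 / ((n : ℝ) - 4 - 2 * s) := by positivity
    have := hp
    rw [hpJL] at this
    linarith
  have hp1' : 0 < p - 1 := by linarith
  -- 2/(p-1) ≤ n - 4 - 2s
  have hkey : 2 / (p - 1) ≤ ((n : ℝ) - 4 - 2 * s) / 2 := by
    have h1 : 4 / ((n : ℝ) - 4 - 2 * s) ≤ p - 1 := by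
      have := hp; rw [hpJL] at this; linarith
    have h2 : 4 ≤ ((n : ℝ) - 4 - 2 * s) * (p - 1) := by
      have := mul_le_mul_of_nonneg_left h1 hden.le
      rw [mul_div_cancel₀ _ hden.ne'] at this
      linarith
    rw [div_le_div_iff₀ hp1' two_pos]
    linarith
  have ha0 : 0 < 2 / (p - 1) := by positivity
  have hbase : 0 < (2 / (p - 1)) * ((n : ℝ) - 2 - 2 / (p - 1)) := by
    have : 0 < (n : ℝ) - 2 - 2 / (p - 1) := by linarith
    positivity
  have hL0 : 0 < L := by rw [hL]; exact Real.rpow_pos_of_pos hbase _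
  -- choose the radius r
  set K : ℝ := max (M + 1) L with hK
  have hK0 : 0 < K := lt_of_lt_of_le hL0 (le_max_right _ _)
  have hLK : L / K ≤ 1 := by
    rw [div_le_one hK0]; exact le_max_right _ _
  have hLK0 : 0 < L / K := by positivity
  set r : ℝ := (L / K) ^ ((p - 1) / 2) with hr
  have hr0 : 0 < r := Real.rpow_pos_of_pos hLK0 _
  -- L * r ^ (-(2/(p-1))) = K
  have hrK : L * r ^ (-(2 / (p - 1))) = K := by
    rw [hr, ← Real.rpow_mul hLK0.le]
    have : (p - 1) / 2 * -(2 / (p - 1)) = -1 := by field_simp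
    rw [this, Real.rpow_neg_one]
    field_simp
  -- get T from hu with ε = r^σ
  have hε0 : 0 < r ^ σ := Real.rpow_pos_of_pos hr0 _
  obtain ⟨T, hT0, hT⟩ := hu (r ^ σ) hε0
  refine ⟨max T (max (r ^ 2) 1), by positivity, ?_⟩
  intro t ht
  have htT : T ≤ t := le_trans (le_max_left _ _) ht
  have htr : r ^ 2 ≤ t := le_trans (le_trans (le_max_left _ _) (le_max_right _ _)) ht
  have ht1 : (1 : ℝ) ≤ t := le_trans (le_trans (le_max_right _ _) (le_max_right _ _)) ht
  have ht0 : 0 < t := lt_of_lt_of_le one_pos ht1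
  -- the point x
  set x : EuclideanSpace ℝ (Fin n) := EuclideanSpace.single ⟨0, by omega⟩ r with hx
  have hxn : ‖x‖ = r := by
    rw [hx, EuclideanSpace.norm_single, Real.norm_eq_abs, abs_of_pos hr0]
  have hx0 : x ≠ 0 := by
    intro h
    rw [h, norm_zero] at hxn
    exact hr0.ne hxn
  refine ⟨x, hx0, ?_⟩
  have hle := hT x hx0 t htT
  -- r ≤ √t
  have hrt : ‖x‖ ≤ Real.sqrt t := by
    rw [hxn]
    exact (Real.le_sqrt hr0.le ht0.le).mpr htr
  -- evaluate the weight
  have hφ : phiWeight n σ x t = Real.sqrt t ^ σ / r ^ σ := by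
    rw [phiWeight, if_pos hrt, hxn, Real.div_rpow (Real.sqrt_nonneg t) hr0.le]
  have hsqrtσ : Real.sqrt t ^ σ = t ^ (σ / 2) := by
    rw [Real.sqrt_eq_rpow, ← Real.rpow_mul ht0.le]
    ring_nf
  have hcorr : r ^ σ * phiWeight n σ x t * t ^ (-σ / 2) = 1 := by
    rw [hφ, hsqrtσ]
    have h1 : r ^ σ ≠ 0 := hε0.ne'
    field_simp
    rw [← Real.rpow_add ht0, show σ / 2 + -(σ / 2) = 0 by ring, Real.rpow_zero]
  rw [hvinf x, hxn, hrK, hcorr] at hle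
  have hMK : M ≤ K - 1 := by
    have : M + 1 ≤ K := le_max_left _ _
    linarith
  linarith
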